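/- arXiv:1703.07968 — 2 statements merged into one kernel-verified Lean document; each statement's English description precedes it below -/
import Mathlib

section
/- Let g : ℝ → ℝ be a convex function with g(0) = 0. Then the function h defined by h(z) = g(z/2) − g(z)/2 is nonincreasing on the positive reals; that is, for all real numbers 0 < z₁ ≤ z₂, one has g(z₂/2) − g(z₂)/2 ≤ g(z₁/2) − g(z₁)/2. -/
theorem convex_half_diff_antitone (g : ℝ → ℝ) (hg : ConvexOn ℝ Set.univ g)
    (hg0 : g 0 = 0) (z₁ z₂ : ℝ) (hz₁ : 0 < z₁) (h12 : z₁ ≤ z₂) :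
    g (z₂ / 2) - g z₂ / 2 ≤ g (z₁ / 2) - g z₁ / 2 := by
  rcases eq_or_lt_of_le h12 with rfl | h12
  · exact le_refl _
  -- slope (z₁/2, z₂/2) ≤ slope (z₁/2, z₂) ≤ slope (z₁, z₂)
  have h1 : (g (z₂/2) - g (z₁/2)) / (z₂/2 - z₁/2) ≤ (g z₂ - g (z₁/2)) / (z₂ - z₁/2) := by
    have := hg.secant_mono (a := z₁/2) (x := z₂/2) (y := z₂) trivial trivial trivial
      (by linarith) (by linarith) (by linarith)
    exact this
  have h2 : (g z₂ - g (z₁/2)) / (z₂ - z₁/2) ≤ (g z₂ - g z₁) / (z₂ - z₁) := by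
    have := hg.secant_mono (a := z₂) (x := z₁/2) (y := z₁) trivial trivial trivial
      (by linarith) (by linarith) (by linarith)
    calc (g z₂ - g (z₁/2)) / (z₂ - z₁/2)
        = (g (z₁/2) - g z₂) / (z₁/2 - z₂) := by rw [← neg_div_neg_eq]; ring_nf
      _ ≤ (g z₁ - g z₂) / (z₁ - z₂) := this
      _ = (g z₂ - g z₁) / (z₂ - z₁) := by rw [← neg_div_neg_eq]; ring_nf
  have h3 := h1.trans h2
  have hd : 0 < z₂ - z₁ := by linarith
  have h4 : g (z₂/2) - g (z₁/2) ≤ (g z₂ - g z₁) / 2 := by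
    have e1 : (g (z₂/2) - g (z₁/2)) / (z₂/2 - z₁/2) = (g (z₂/2) - g (z₁/2)) / (z₂ - z₁) * 2 := by
      field_simp
    have e2 : (g z₂ - g z₁) / (z₂ - z₁) = (g z₂ - g z₁) / 2 / (z₂ - z₁) * 2 := by
      field_simp
    rw [e1, e2] at h3
    have := le_of_mul_le_mul_right h3 (by norm_num : (0:ℝ) < 2)
    exact (div_le_div_iff_of_pos_right hd).mp this
  linarith
end

section
/- Let g : ℝ → ℝ be a convex function with g(0) = 0. Let x₁, x₂, x₃ be positive real numbers such that x₁ + x₂ − x₃ ≥ 0 and xᵢ ≤ x₁ + x₂ − x₃ for each i ∈ {1, 2, 3}. Then g(x₁ + x₂ − x₃) ≥ g(x₁) + g(x₂) − g(x₃). -/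
theorem convex_three_term_exchange (g : ℝ → ℝ) (hg : ConvexOn ℝ Set.univ g)
    (hg0 : g 0 = 0) (x₁ x₂ x₃ : ℝ) (hx₁ : 0 < x₁) (hx₂ : 0 < x₂) (hx₃ : 0 < x₃)
    (hsum : 0 ≤ x₁ + x₂ - x₃)
    (h₁ : x₁ ≤ x₁ + x₂ - x₃) (h₂ : x₂ ≤ x₁ + x₂ - x₃) (h₃ : x₃ ≤ x₁ + x₂ - x₃) :
    g (x₁ + x₂ - x₃) ≥ g x₁ + g x₂ - g x₃ := by
  set s := x₁ + x₂ - x₃ with hs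
  rcases eq_or_lt_of_le h₃ with heq | hlt
  · have e1 : x₁ = x₃ := by linarith
    have e2 : x₂ = x₃ := by linarith
    rw [← heq, e1, e2]; linarith [le_refl (g x₃)]
  · set t : ℝ := (s - x₁) / (s - x₃) with htdef
    have hden : (0:ℝ) < s - x₃ := by linarith
    have ht0 : 0 ≤ t := div_nonneg (by linarith) hden.le
    have ht1 : t ≤ 1 := by
      rw [div_le_one hden]; linarith
    have h1t : 0 ≤ 1 - t := by linarith
    have key : t * (s - x₃) = s - x₁ := div_mul_cancel₀ _ hden.ne'
    have c1 := hg.2 (Set.mem_univ x₃) (Set.mem_univ s) ht0 h1t (by ring)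
    have c2 := hg.2 (Set.mem_univ x₃) (Set.mem_univ s) h1t ht0 (by ring)
    simp only [smul_eq_mul] at c1 c2
    have e1 : t * x₃ + (1 - t) * s = x₁ := by nlinarith [key]
    have e2 : (1 - t) * x₃ + t * s = x₂ := by nlinarith [key]
    rw [e1] at c1
    rw [e2] at c2
    linarith
end
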